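/- Let S be a finite set with |S| = n and f a permutation of S. Then the number of functions g : S → S commuting with f is at least n. -/

import Mathlib

open Function

theorem commuting_aux : ∀ (n : ℕ) (S : Type u) [Fintype S] (f : Equiv.Perm S),
    Fintype.card S = n → n ≤ Nat.card {g : S → S | ⇑f ∘ g = g ∘ ⇑f} := by
  intro n
  induction n using Nat.strong_induction_on with
  | _ n IH =>
  intro S _ f hcard
  classical
  set E : Set (S → S) := {g : S → S | ⇑f ∘ g = g ∘ ⇑f} with hE
  have hid : (id : S → S) ∈ E := by simp [hE]
  rcases Nat.lt_or_ge n 2 with h2 | h2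
  · -- n = 0 or 1
    have : Nonempty E := ⟨⟨id, hid⟩⟩
    have hpos : 0 < Nat.card E := Nat.card_pos
    omega
  by_cases hfix : ∃ p, f p = p
  · -- Case 1: f has a fixed point p
    obtain ⟨p, hp⟩ := hfix
    have hpf : ∀ x : S, x ≠ p ↔ f x ≠ p := by
      intro x
      constructor
      · intro h hx; exact h (f.injective (hx.trans hp.symm))
      · intro h hx; subst hx; exact h hp
    let f' : Equiv.Perm {x : S // x ≠ p} := f.subtypePerm (fun x => (hpf x).symm)
    have hcard' : Fintype.card {x : S // x ≠ p} = n - 1 := by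
      have h1 : Fintype.card {x : S // x = p} = 1 := Fintype.card_subtype_eq p
      have := Fintype.card_subtype_compl (fun x : S => x = p)
      rw [h1, hcard] at this
      exact this
    have hE' := IH (n - 1) (by omega) {x : S // x ≠ p} f' hcard'
    set E' : Set ({x : S // x ≠ p} → {x : S // x ≠ p}) :=
      {g | ⇑f' ∘ g = g ∘ ⇑f'} with hE'def
    -- extension map
    have hext : ∀ g' : E', (fun x : S => if hx : x = p then p else ↑(g'.1 ⟨x, hx⟩)) ∈ E := by
      rintro ⟨g', hg'⟩
      funext x
      by_cases hx : x = p
      · subst hx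
        simp [hp]
      · have hfx : f x ≠ p := (hpf x).mp hx
        simp only [comp_apply, dif_neg hx, dif_neg hfx]
        have := congrFun hg' ⟨x, hx⟩
        simp only [comp_apply] at this
        have h2 : (⟨f x, hfx⟩ : {x : S // x ≠ p}) = f' ⟨x, hx⟩ := rfl
        rw [h2, ← this]
        rfl
    have hconst : (fun _ : S => p) ∈ E := by
      funext x; simp [hp]
    let Φ : Option E' → E := fun o =>
      match o with
      | none => ⟨fun _ => p, hconst⟩
      | some g' => ⟨fun x => if hx : x = p then p else ↑(g'.1 ⟨x, hx⟩), hext g'⟩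
    have hΦ : Function.Injective Φ := by
      rintro (_ | g₁) (_ | g₂) h
      · rfl
      · exfalso
        obtain ⟨x, hx⟩ := Fintype.exists_ne_of_one_lt_card (by omega : 1 < Fintype.card S) p
        have := congrFun (congrArg Subtype.val h) x
        simp only [Φ, dif_neg hx] at this
        exact (g₂.1 ⟨x, hx⟩).2 this.symm
      · exfalso
        obtain ⟨x, hx⟩ := Fintype.exists_ne_of_one_lt_card (by omega : 1 < Fintype.card S) p
        have := congrFun (congrArg Subtype.val h) x
        simp only [Φ, dif_neg hx] at this
        exact (g₁.1 ⟨x, hx⟩).2 this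
      · congr 1
        apply Subtype.ext
        funext y
        have := congrFun (congrArg Subtype.val h) ↑y
        simp only [Φ, dif_neg y.2] at this
        exact Subtype.ext this
    have hle : Nat.card (Option E') ≤ Nat.card E := Nat.card_le_card_of_injective Φ hΦ
    rw [Finite.card_option] at hle
    omega
  · -- Case 2: no fixed points
    push_neg at hfix
    have hne : Nonempty S := Fintype.card_pos_iff.mp (by omega)
    obtain ⟨a⟩ := hne
    set m := Function.minimalPeriod f a with hm
    have hper : a ∈ Function.periodicPts f := by
      refine Function.mem_periodicPts.mpr ⟨orderOf f, orderOf_pos f, ?_⟩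
      show f^[orderOf f] a = a
      rw [Equiv.Perm.iterate_eq_pow, pow_orderOf_eq_one]
      rfl
    have hm0 : 0 < m := Function.minimalPeriod_pos_of_mem_periodicPts hper
    have hma : f^[m] a = a := Function.isPeriodicPt_minimalPeriod f a
    have hm1 : m ≠ 1 := by
      intro h
      rw [h] at hma
      exact hfix a hma
    set C : Finset S := (Finset.range m).image (fun k => (f ^ k) a) with hC
    have haC : a ∈ C := by
      refine Finset.mem_image.mpr ⟨0, Finset.mem_range.mpr hm0, ?_⟩
      simp
    have hinj : Set.InjOn (fun k => (f ^ k) a) ↑(Finset.range m) := by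
      rw [Finset.coe_range]
      exact Function.iterate_injOn_Iio_minimalPeriod
    have hCcard : C.card = m := by
      rw [hC, Finset.card_image_of_injOn hinj, Finset.card_range]
    have hmlen : m ≤ n := by
      rw [← hCcard, ← hcard]; exact Finset.card_le_univ C
    have hstep : ∀ i : ℕ, f ((f ^ i) a) = (f ^ (i + 1)) a := by
      intro i
      rw [pow_succ']
      rfl
    have hfm : (f ^ m) a = a := hma
    have hCf : ∀ x, x ∈ C ↔ f x ∈ C := by
      intro x
      constructor
      · rintro hx
        obtain ⟨k, hk, rfl⟩ := Finset.mem_image.mp hx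
        rw [Finset.mem_range] at hk
        rcases Nat.lt_or_ge (k + 1) m with h | h
        · refine Finset.mem_image.mpr ⟨k + 1, Finset.mem_range.mpr h, ?_⟩
          exact (hstep k).symm
        · have hk1 : k + 1 = m := by omega
          have : f ((f ^ k) a) = a := by rw [hstep k, hk1, hfm]
          rw [this]; exact haC
      · intro hx
        obtain ⟨k, hk, hkx⟩ := Finset.mem_image.mp hx
        rw [Finset.mem_range] at hk
        set j := if k = 0 then m - 1 else k - 1 with hj
        have hjm : j < m := by rw [hj]; split <;> omega
        have hfj : f ((f ^ j) a) = (f ^ k) a := by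
          rw [hj]
          split
          · next h0 =>
            rw [hstep (m - 1), show m - 1 + 1 = m by omega, hfm, h0, pow_zero]
            rfl
          · next h0 =>
            rw [hstep (k - 1), show k - 1 + 1 = k by omega]
        have hx2 : x = (f ^ j) a := f.injective (by rw [hfj, hkx])
        rw [hx2]
        exact Finset.mem_image.mpr ⟨j, Finset.mem_range.mpr hjm, rfl⟩
    have hcomm : ∀ t : ℕ, ⇑f ∘ ⇑(f ^ t) = ⇑(f ^ t) ∘ ⇑f := by
      intro t
      have h : f * f ^ t = f ^ t * f := by rw [← pow_succ', ← pow_succ]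
      funext x
      show (f * f ^ t) x = (f ^ t * f) x
      rw [h]
    by_cases hCuniv : ∀ x, x ∈ C
    · -- single cycle: m = n, use powers of f
      have hmn : m = n := by
        have : C = Finset.univ := Finset.eq_univ_iff_forall.mpr hCuniv
        rw [← hCcard, this, Finset.card_univ, hcard]
      let Φ : Fin n → E := fun t => ⟨⇑(f ^ (t : ℕ)), hcomm t⟩
      have hΦ : Function.Injective Φ := by
        intro t u h
        have h2 := congrFun (congrArg Subtype.val h) a
        simp only [Φ] at h2
        have := hinj (by rw [Finset.coe_range]; exact Set.mem_Iio.mpr (hmn ▸ t.2))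
          (by rw [Finset.coe_range]; exact Set.mem_Iio.mpr (hmn ▸ u.2)) h2
        exact Fin.ext this
      have := Nat.card_le_card_of_injective Φ hΦ
      rwa [Nat.card_eq_fintype_card, Fintype.card_fin] at this
    · -- more than one cycle
      push_neg at hCuniv
      obtain ⟨b, hb⟩ := hCuniv
      have hpf : ∀ x : S, x ∉ C ↔ f x ∉ C := fun x => not_congr (hCf x)
      let f' : Equiv.Perm {x : S // x ∉ C} := f.subtypePerm (fun x => (hpf x).symm)
      have hcard' : Fintype.card {x : S // x ∉ C} = n - m := by
        have h1 : Fintype.card {x : S // x ∈ C} = m := by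
          rw [← hCcard]
          exact Fintype.card_coe C
        have := Fintype.card_subtype_compl (fun x : S => x ∈ C)
        rw [h1, hcard] at this
        exact this
      have hnm1 : 1 ≤ n - m := by
        have : Nonempty {x : S // x ∉ C} := ⟨⟨b, hb⟩⟩
        have := Fintype.card_pos_iff.mpr this
        omega
      have hnm2 : 2 ≤ n - m := by
        rcases Nat.lt_or_ge (n - m) 2 with h | h
        · exfalso
          have hone : Fintype.card {x : S // x ∉ C} = 1 := by omega
          obtain ⟨x, hx⟩ := Fintype.card_eq_one_iff.mp hone
          have hfx : f' x = x := hx (f' x)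
          have : f ↑x = ↑x := congrArg Subtype.val hfx
          exact hfix ↑x this
        · exact h
      have hm2 : 2 ≤ m := by omega
      have hE' := IH (n - m) (by omega) {x : S // x ∉ C} f' hcard'
      set E' : Set ({x : S // x ∉ C} → {x : S // x ∉ C}) :=
        {g | ⇑f' ∘ g = g ∘ ⇑f'} with hE'def
      have hGmem : ∀ (t : ℕ) (g' : E'),
          (fun x : S => if hx : x ∈ C then (f ^ t) x else ↑(g'.1 ⟨x, hx⟩)) ∈ E := by
        rintro t ⟨g', hg'⟩
        funext x
        by_cases hx : x ∈ C
        · have hfx : f x ∈ C := (hCf x).mp hx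
          simp only [comp_apply, dif_pos hx, dif_pos hfx]
          exact congrFun (hcomm t) x
        · have hfx : f x ∉ C := (hpf x).mp hx
          simp only [comp_apply, dif_neg hx, dif_neg hfx]
          have := congrFun hg' ⟨x, hx⟩
          simp only [comp_apply] at this
          have h2 : (⟨f x, hfx⟩ : {x : S // x ∉ C}) = f' ⟨x, hx⟩ := rfl
          rw [h2, ← this]
          rfl
      let Φ : Fin m × E' → E := fun tg =>
        ⟨fun x => if hx : x ∈ C then (f ^ (tg.1 : ℕ)) x else ↑(tg.2.1 ⟨x, hx⟩),
          hGmem tg.1 tg.2⟩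
      have hΦ : Function.Injective Φ := by
        rintro ⟨t, g₁⟩ ⟨u, g₂⟩ h
        have hfun := congrArg Subtype.val h
        have ht : t = u := by
          have h2 := congrFun hfun a
          simp only [Φ, dif_pos haC] at h2
          have := hinj (by rw [Finset.coe_range]; exact Set.mem_Iio.mpr t.2)
            (by rw [Finset.coe_range]; exact Set.mem_Iio.mpr u.2) h2
          exact Fin.ext this
        have hg : g₁ = g₂ := by
          apply Subtype.ext
          funext y
          have h2 := congrFun hfun ↑y
          simp only [Φ, dif_neg y.2] at h2
          exact Subtype.ext h2
        rw [ht, hg]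
      have hle : Nat.card (Fin m × E') ≤ Nat.card E := Nat.card_le_card_of_injective Φ hΦ
      rw [Nat.card_prod, Nat.card_eq_fintype_card, Fintype.card_fin] at hle
      have hge : n - m ≤ Nat.card E' := hE'
      have : n ≤ m * (n - m) := by nlinarith [Nat.sub_add_cancel hmlen]
      calc n ≤ m * (n - m) := this
        _ ≤ m * Nat.card E' := Nat.mul_le_mul_left m hge
        _ ≤ Nat.card E := hle

theorem commuting_functions_card_ge {S : Type*} [Fintype S]
    (n : ℕ) (hcard : Fintype.card S = n) (f : Equiv.Perm S) :
    n ≤ Nat.card {g : S → S | ⇑f ∘ g = g ∘ ⇑f} :=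
  commuting_aux n S f hcard
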